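/- Let r > 1 be real and define F_r(x) = ∫_{2r}^x (log log √(rt) − log log √(t/r))/log t dt for x ≥ 2r. Then F_r is concave on [2r, ∞), i.e., its derivative (log log √(rx) − log log √(x/r))/log x is non-increasing in x for x ≥ 2r. -/
import Mathlib


open Real

theorem stmt_1 (r : ℝ) (hr : 1 < r) :
    AntitoneOn
      (fun x : ℝ =>
        (Real.log (Real.log (Real.sqrt (r * x))) -
          Real.log (Real.log (Real.sqrt (x / r)))) / Real.log x)
      (Set.Ici (2 * r)) := by
  have hr0 : 0 < r := lt_trans one_pos hr
  have ha : 0 < Real.log r := Real.log_pos hr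
  have h2 : (0:ℝ) < Real.log 2 := Real.log_pos one_lt_two
  -- rewrite the numerator
  have key : ∀ z : ℝ, 2 * r ≤ z →
      Real.log (Real.log (Real.sqrt (r * z))) - Real.log (Real.log (Real.sqrt (z / r)))
        = Real.log (Real.log z + Real.log r) - Real.log (Real.log z - Real.log r) := by
    intro z hz
    have hz0 : 0 < z := by nlinarith
    have h1 : Real.log 2 ≤ Real.log z - Real.log r := by
      have h2z : (2:ℝ) ≤ z / r := (le_div_iff₀ hr0).2 (by linarith)
      have := Real.log_le_log (by norm_num) h2z
      rwa [Real.log_div hz0.ne' hr0.ne'] at this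
    have hsum : 0 < Real.log z + Real.log r := by linarith
    have hdiff : 0 < Real.log z - Real.log r := by linarith
    rw [Real.log_sqrt (by positivity), Real.log_sqrt (by positivity),
        Real.log_mul hr0.ne' hz0.ne', Real.log_div hz0.ne' hr0.ne',
        show Real.log r + Real.log z = Real.log z + Real.log r from by ring,
        Real.log_div hsum.ne' two_ne_zero, Real.log_div hdiff.ne' two_ne_zero]
    ring
  -- log z - log r ≥ log 2 for z ≥ 2r
  have hd : ∀ z : ℝ, 2 * r ≤ z → Real.log 2 ≤ Real.log z - Real.log r := by
    intro z hz
    have hz0 : 0 < z := by nlinarith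
    have h2z : (2:ℝ) ≤ z / r := (le_div_iff₀ hr0).2 (by linarith)
    have := Real.log_le_log (by norm_num) h2z
    rwa [Real.log_div hz0.ne' hr0.ne'] at this
  intro x hx y hy hxy
  simp only [Set.mem_Ici] at hx hy
  have hx0 : 0 < x := by nlinarith
  have hy0 : 0 < y := by nlinarith
  dsimp only
  rw [key x hx, key y hy]
  have hdx : 0 < Real.log x - Real.log r := lt_of_lt_of_le h2 (hd x hx)
  have hdy : 0 < Real.log y - Real.log r := lt_of_lt_of_le h2 (hd y hy)
  have hlx : 0 < Real.log x := by linarith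
  have hly : 0 < Real.log y := by linarith
  have hlxy : Real.log x ≤ Real.log y := Real.log_le_log hx0 hxy
  -- numerator comparison
  have hnum : Real.log (Real.log y + Real.log r) - Real.log (Real.log y - Real.log r)
      ≤ Real.log (Real.log x + Real.log r) - Real.log (Real.log x - Real.log r) := by
    have hprod : (Real.log y + Real.log r) * (Real.log x - Real.log r)
        ≤ (Real.log x + Real.log r) * (Real.log y - Real.log r) := by nlinarith
    have hlog := Real.log_le_log (by positivity) hprod
    rw [Real.log_mul (by positivity) (by positivity),
        Real.log_mul (by positivity) (by positivity)] at hlog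
    linarith
  -- numerator nonneg
  have hnn : 0 ≤ Real.log (Real.log y + Real.log r) - Real.log (Real.log y - Real.log r) := by
    have := Real.log_le_log hdy (by linarith : Real.log y - Real.log r ≤ Real.log y + Real.log r)
    linarith
  exact div_le_div₀ (by linarith) hnum hlx hlxy
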